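/- For a ≥ 2 and a ≤ x < 2a, the minimum of ν(a*x + y) over y with x - a ≤ y ≤ a - 1 equals (a+1)x - a² + 1, attained at y = x - a; and the minimum over x - a < y ≤ a - 1 equals a(x - a + 2), attained at y = x - a + 1 and y = a - 1. -/
import Mathlib


def Lam (a : ℕ) : Set ℕ := {n | ∃ i j : ℕ, n = i * a + j * (a + 1)}

noncomputable def nu (a l : ℕ) : ℕ := {m | m ∈ Lam a ∧ ∃ k ∈ Lam a, m + k = l}.ncard

lemma uniq_aux {a p q r t : ℕ} (hr : r < a) (ht : t < a)
    (h : p * a + r = q * a + t) : p = q ∧ r = t := by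
  have h1 : (p * a + r) % a = r := by
    rw [mul_comm, Nat.mul_add_mod, Nat.mod_eq_of_lt hr]
  have h2 : (q * a + t) % a = t := by
    rw [mul_comm, Nat.mul_add_mod, Nat.mod_eq_of_lt ht]
  have hrt : r = t := by rw [← h1, ← h2, h]
  subst hrt
  have hpq : p * a = q * a := by omega
  exact ⟨Nat.eq_of_mul_eq_mul_right (by omega) hpq, rfl⟩

lemma lam_iff {a : ℕ} (ha : 1 ≤ a) (n : ℕ) :
    n ∈ Lam a ↔ ∃ s j : ℕ, j ≤ s ∧ j < a ∧ n = s * a + j := by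
  constructor
  · rintro ⟨i, j, rfl⟩
    obtain ⟨q, r, hj, hrlt⟩ : ∃ q r, j = a * q + r ∧ r < a :=
      ⟨j / a, j % a, (Nat.div_add_mod j a).symm, Nat.mod_lt _ ha⟩
    subst hj
    refine ⟨i + (a * q + r) + q, r, ?_, hrlt, by ring⟩
    nlinarith
  · rintro ⟨s, j, hjs, hja, rfl⟩
    obtain ⟨e, rfl⟩ : ∃ e, s = j + e := ⟨s - j, by omega⟩
    exact ⟨e, j, by ring⟩

lemma nu_formula (a x y : ℕ) (ha : 2 ≤ a) (hax : a ≤ x) (hx : x < 2 * a)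
    (hy1 : x - a ≤ y) (hy2 : y ≤ a - 1) :
    nu a (a * x + y) = (x - y + 1) * (y + 1) := by
  have ha1 : 1 ≤ a := by omega
  have hyx : y < x := by omega
  classical
  have hset : {m | m ∈ Lam a ∧ ∃ k ∈ Lam a, m + k = a * x + y}
      = ↑(((Finset.range (y + 1)) ×ˢ (Finset.range (x - y + 1))).image
          (fun p : ℕ × ℕ => (p.1 + p.2) * a + p.1)) := by
    ext m
    simp only [Set.mem_setOf_eq, Finset.coe_image, Set.mem_image, Finset.mem_coe,
      Finset.mem_product, Finset.mem_range]
    constructor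
    · rintro ⟨hm, k, hk, heq⟩
      rw [lam_iff ha1] at hm hk
      obtain ⟨s, j, hjs, hja, rfl⟩ := hm
      obtain ⟨s', j', hjs', hja', rfl⟩ := hk
      by_cases hc : j + j' < a
      · have heq' : (s + s') * a + (j + j') = x * a + y := by
          have e1 : (s + s') * a = s * a + s' * a := by ring
          have e2 : x * a = a * x := by ring
          linarith
        obtain ⟨h1, h2⟩ := uniq_aux hc (by omega) heq'
        refine ⟨(j, s - j), ⟨by omega, by omega⟩, ?_⟩
        have : j + (s - j) = s := by omega
        simp only [this]
      · exfalso
        obtain ⟨w, hw⟩ : ∃ w, j + j' = a + w := ⟨j + j' - a, by omega⟩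
        have heq' : (s + s' + 1) * a + w = x * a + y := by
          have e1 : (s + s' + 1) * a = s * a + s' * a + a := by ring
          have e2 : x * a = a * x := by ring
          linarith
        obtain ⟨h1, h2⟩ := uniq_aux (a := a) (by omega) (by omega) heq'
        omega
    · rintro ⟨⟨v, t⟩, ⟨hv, ht⟩, rfl⟩
      simp only at *
      have hv' : v ≤ y := by omega
      have ht' : t ≤ x - y := by omega
      refine ⟨?_, (x - v - t) * a + (y - v), ?_, ?_⟩
      · rw [lam_iff ha1]
        exact ⟨v + t, v, by omega, by omega, rfl⟩
      · rw [lam_iff ha1]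
        exact ⟨x - v - t, y - v, by omega, by omega, rfl⟩
      · obtain ⟨u, hu⟩ : ∃ u, x = v + t + u := ⟨x - v - t, by omega⟩
        obtain ⟨w, hw⟩ : ∃ w, y = v + w := ⟨y - v, by omega⟩
        have e1 : x - v - t = u := by omega
        have e2 : y - v = w := by omega
        rw [e1, e2]
        subst hu hw
        ring
  unfold nu
  rw [hset, Set.ncard_coe_finset]
  rw [Finset.card_image_of_injOn, Finset.card_product, Finset.card_range,
    Finset.card_range, mul_comm]
  rintro ⟨v, t⟩ hvt ⟨v', t'⟩ hvt' h
  simp only [Finset.mem_coe, Finset.mem_product, Finset.mem_range] at hvt hvt'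
  simp only at h
  obtain ⟨h1, h2⟩ := uniq_aux (a := a) (r := v) (t := v') (by omega) (by omega) h
  have : t = t' := by omega
  simp_all

theorem stmt14 (a x : ℕ) (ha : 2 ≤ a) (hax : a ≤ x) (hx : x < 2 * a) :
    ((∀ y : ℕ, x - a ≤ y → y ≤ a - 1 →
        (a + 1) * x + 1 - a ^ 2 ≤ nu a (a * x + y)) ∧
      nu a (a * x + (x - a)) = (a + 1) * x + 1 - a ^ 2) ∧
    ((∀ y : ℕ, x - a < y → y ≤ a - 1 →
        a * (x - a + 2) ≤ nu a (a * x + y)) ∧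
      (x - a + 1 ≤ a - 1 →
        nu a (a * x + (x - a + 1)) = a * (x - a + 2) ∧
        nu a (a * x + (a - 1)) = a * (x - a + 2))) := by
  refine ⟨⟨?_, ?_⟩, ?_, ?_⟩
  · intro y hy1 hy2
    rw [nu_formula a x y ha hax hx hy1 hy2]
    rw [tsub_le_iff_right]
    obtain ⟨d, rfl⟩ : ∃ d, x = y + d := ⟨x - y, by omega⟩
    have e1 : y + d - y = d := by omega
    rw [e1]
    have hd : d ≤ a := by omega
    have hy : y ≤ a := by omega
    zify
    nlinarith [mul_nonneg (by omega : (0:ℤ) ≤ (a:ℤ) - d) (by omega : (0:ℤ) ≤ (a:ℤ) - y)]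
  · rw [nu_formula a x (x - a) ha hax hx le_rfl (by omega)]
    obtain ⟨e, rfl⟩ : ∃ e, x = a + e := ⟨x - a, by omega⟩
    have e1 : a + e - (a + e - a) = a := by omega
    have e2 : a + e - a = e := by omega
    rw [e1, e2]
    have : (a + 1) * (a + e) + 1 = (a + 1) * (e + 1) + a ^ 2 := by ring
    omega
  · intro y hy1 hy2
    rw [nu_formula a x y ha hax hx (by omega) hy2]
    obtain ⟨c, rfl⟩ : ∃ c, x = a + c := ⟨x - a, by omega⟩
    have e1 : a + c - a = c := by omega
    rw [e1]
    obtain ⟨d, hd⟩ : ∃ d, a + c = y + d := ⟨a + c - y, by omega⟩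
    have e2 : a + c - y = d := by omega
    rw [e2]
    have hd1 : d ≤ a - 1 := by omega
    have hy : y ≤ a - 1 := hy2
    zify
    nlinarith [mul_nonneg (by omega : (0:ℤ) ≤ (a:ℤ) - 1 - d) (by omega : (0:ℤ) ≤ (a:ℤ) - 1 - y)]
  · intro hcond
    constructor
    · rw [nu_formula a x (x - a + 1) ha hax hx (by omega) hcond]
      have e1 : x - (x - a + 1) + 1 = a := by omega
      have e2 : x - a + 1 + 1 = x - a + 2 := by omega
      rw [e1, e2]
    · rw [nu_formula a x (a - 1) ha hax hx (by omega) le_rfl]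
      have e1 : x - (a - 1) + 1 = x - a + 2 := by omega
      have e2 : a - 1 + 1 = a := by omega
      rw [e1, e2, mul_comm]
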